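/- Assume the simultaneous Doeblin condition, fix α ∈ (0,1), and suppose J*(λ,·) is not constant. Let ε ∈ (0,ξ), let i ≥ 1, let x ∈ G_i, and suppose π ∈ 𝒫 is ε-optimal at x. Then P_x^π[ X_{T_{G_i^c}} ∈ ⋃_{k=0}^{i−1} G_k ] = 1; that is, with probability one the system exits G_i into a strictly lower level set of J*(λ,·). -/

import Mathlib

open scoped Classical BigOperators ENNReal

namespace RiskSensitive

/-- A (history-dependent, randomized) policy for a finite MDP: given the past
(chronological list of (state, action) pairs) and the current state, it assigns a
probability weight to each action, concentrated on the admissible actions. -/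
structure Policy (S A : Type*) [Fintype S] [Fintype A] (Adm : S → Finset A) where
  toFun : List (S × A) → S → A → ℝ
  nonneg : ∀ h s a, 0 ≤ toFun h s a
  sum_one : ∀ h s, ∑ a, toFun h s a = 1
  supp : ∀ h s a, a ∉ Adm s → toFun h s a = 0

variable {S A : Type*} [Fintype S] [Fintype A]
variable (Adm : S → Finset A) (p : S → A → S → ℝ) (C : S → A → ℝ) (lam : ℝ)

/-- Probability of a finite trajectory (list of (action, next-state) pairs), given the
history so far and the current state. -/
noncomputable def pathProbAux (π : Policy S A Adm) :
    List (S × A) → S → List (A × S) → ℝ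
  | _, _, [] => 1
  | hist, x, (a, y) :: rest =>
      π.toFun hist x a * p x a y * pathProbAux π (hist ++ [(x, a)]) y rest

/-- `pathProb π x l` is `P_x^π[A_0 = a_0, X_1 = y_1, …]` for `l = [(a_0,y_1),…]`. -/
noncomputable def pathProb (π : Policy S A Adm) (x : S) (l : List (A × S)) : ℝ :=
  pathProbAux Adm p π [] x l

/-- Probability of a cylinder event depending on the first `n` (action, next-state) pairs. -/
noncomputable def cylProb (π : Policy S A Adm) (x : S) (n : ℕ)
    (E : (Fin n → A × S) → Prop) : ℝ :=
  ∑ v : Fin n → A × S, if E v then pathProb Adm p π x (List.ofFn v) else 0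

/-- The state `X_t` along the trajectory encoded by `l`, starting from `x`. -/
def stateAt (x : S) (l : List (A × S)) (t : ℕ) : S :=
  (l.take t).foldl (fun _ q => q.2) x

/-- The final state of the finite trajectory `l` started at `x`. -/
def lastState (x : S) (l : List (A × S)) : S :=
  l.foldl (fun _ q => q.2) x

/-- `Σ_t w(X_t, A_t)` along the finite trajectory `l` started at `x`. -/
def costSum (w : S → A → ℝ) : S → List (A × S) → ℝ
  | _, [] => 0
  | x, (a, y) :: rest => w x a + costSum w y rest

/-- `J_n(λ,π,x) = (1/λ) log E_x^π[exp(λ Σ_{t<n} C(X_t,A_t))]`. -/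
noncomputable def Jn (π : Policy S A Adm) (x : S) (n : ℕ) : ℝ :=
  (1 / lam) * Real.log (∑ v : Fin n → A × S,
    pathProb Adm p π x (List.ofFn v) * Real.exp (lam * costSum C x (List.ofFn v)))

/-- The risk-sensitive average cost `J(λ,π,x) = limsup_n J_n(λ,π,x)/n`. -/
noncomputable def Javg (π : Policy S A Adm) (x : S) : ℝ :=
  Filter.limsup (fun n : ℕ => Jn Adm p C lam π x n / n) Filter.atTop

/-- Optimal risk-sensitive average cost `J*(λ,x)`. -/
noncomputable def Jopt (x : S) : ℝ :=
  ⨅ π : Policy S A Adm, Javg Adm p C lam π x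

/-- `π` is `ε`-optimal at `x`. -/
def EpsOptimalAt (π : Policy S A Adm) (x : S) (ε : ℝ) : Prop :=
  Javg Adm p C lam π x ≤ Jopt Adm p C lam x + ε

/-- `FirstExit Q v` : the trajectory `v` leaves `{Q}` for the first time exactly at its
last step, i.e. the exit time of `Q` equals `n`. -/
def FirstExit (Q : S → Prop) {n : ℕ} (v : Fin n → A × S) : Prop :=
  0 < n ∧ (∀ t : Fin n, (t : ℕ) + 1 < n → Q (v t).2) ∧
    ∀ t : Fin n, (t : ℕ) + 1 = n → ¬ Q (v t).2

/-- `E_x^π[ exp(Σ_{t<τ} w(X_t,A_t)) ]` where `τ = min{n ≥ 1 : ¬ Q (X_n)}` is the first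
exit time from `Q` (the contribution of `[τ = ∞]` is null when `τ < ∞` a.s.). -/
noncomputable def EexitExp (π : Policy S A Adm) (x : S) (Q : S → Prop)
    (w : S → A → ℝ) : ℝ≥0∞ :=
  ∑' n : ℕ, ∑ v : Fin n → A × S,
    if FirstExit Q v then
      ENNReal.ofReal (pathProb Adm p π x (List.ofFn v) *
        Real.exp (costSum w x (List.ofFn v)))
    else 0

/-- `E_x^π[ exp(Σ_{t<T} w(X_t,A_t)) ]` with `T` the first positive arrival time to `z`. -/
noncomputable def EhitExp (π : Policy S A Adm) (x z : S) (w : S → A → ℝ) : ℝ≥0∞ :=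
  EexitExp Adm p π x (fun y => y ≠ z) w

/-- `E_x^π[T]`, the expected first positive arrival time to `z`, computed as
`Σ_{n≥0} P_x^π[T > n]`. -/
noncomputable def ExpT (π : Policy S A Adm) (x z : S) : ℝ≥0∞ :=
  ∑' n : ℕ, ENNReal.ofReal
    (cylProb Adm p π x n (fun v => ∀ t : Fin n, (v t).2 ≠ z))

/-- `P_x^π[T > n]`, the probability that `z` is not visited during the first `n` steps. -/
noncomputable def survProb (π : Policy S A Adm) (x z : S) (n : ℕ) : ℝ :=
  cylProb Adm p π x n (fun v => ∀ t : Fin n, (v t).2 ≠ z)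

/-- The stationary policy induced by a choice function `f ∈ 𝔽`. -/
noncomputable def stationary (f : S → A) (hf : ∀ s, f s ∈ Adm s) : Policy S A Adm where
  toFun := fun _ s a => if a = f s then 1 else 0
  nonneg := by intro h s a; (try dsimp only); split <;> norm_num
  sum_one := by intro h s; simp
  supp := by
    intro h s a ha
    try dsimp only
    rw [if_neg]
    intro hEq
    exact ha (hEq ▸ hf s)

/-- The simultaneous Doeblin condition: `E_x^f[T] ≤ M` for every state `x` and every
stationary policy `f`, where `T` is the first positive arrival time to `z`. -/
def Doeblin (z : S) (M : ℝ) : Prop :=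
  0 < M ∧ ∀ (x : S) (f : S → A) (hf : ∀ s, f s ∈ Adm s),
    ExpT Adm p (stationary Adm f hf) x z ≤ ENNReal.ofReal M

/-- `B_g(x) = {a ∈ A(x) : g(x) = max{g(y) : p_{xy}(a) > 0}}`. -/
def Bg (g : S → ℝ) (x : S) : Set A :=
  {a | a ∈ Adm x ∧ g x = sSup (g '' {y | 0 < p x a y})}

/-- The family `𝒢` of functions characterizing `J*(λ,·)`. -/
def Gclass : Set (S → ℝ) :=
  {g | (∀ x, g x = sInf ((fun a => sSup (g '' {y | 0 < p x a y})) '' (Adm x : Set A))) ∧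
    ∃ h : S → ℝ, ∀ x,
      sInf ((fun a => Real.exp (lam * C x a) * ∑ y, p x a y * Real.exp (lam * h y)) ''
        Bg Adm p g x) ≤ Real.exp (lam * g x + lam * h x)}

/-- The class `𝒫*` of policies which always select actions in `B*(X_t)`. -/
def Pstar : Set (Policy S A Adm) :=
  {π | ∀ (x : S) (t : ℕ),
    cylProb Adm p π x (t + 1)
      (fun v => (v (Fin.last t)).1 ∈
        Bg Adm p (Jopt Adm p C lam) (stateAt x (List.ofFn v) t)) = 1}

/-- The deviation function
`h(x) = inf_{π ∈ 𝒫*} (1/λ) log E_x^π[exp(λα Σ_{t<T}(C(X_t,A_t) − J*(λ,X_t)))]`. -/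
noncomputable def hdev (z : S) (α : ℝ) (x : S) : EReal :=
  ⨅ π ∈ Pstar Adm p C lam, ((lam⁻¹ : ℝ) : EReal) *
    ENNReal.log (EhitExp Adm p π x z
      (fun s a => lam * α * (C s a - Jopt Adm p C lam s)))

/-- `ψ(ε) = (1/λ) inf_{δ∈𝒫*} log E_z^δ[exp(λ Σ_{t<T}(C(X_t,A_t) − γ₀ − 2ε))]`. -/
noncomputable def psi (z : S) (ε : ℝ) : EReal :=
  ((lam⁻¹ : ℝ) : EReal) * ⨅ π ∈ Pstar Adm p C lam,
    ENNReal.log (EhitExp Adm p π z z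
      (fun s a => lam * (C s a - Jopt Adm p C lam z - 2 * ε)))

/-- `ξ₀ = −(1−α) log β / (λα)`. -/
noncomputable def xi0 (α β : ℝ) : ℝ := -((1 - α) * Real.log β) / (lam * α)

/-- `ξ₁`: 1 if `J*(λ,·)` is constant, otherwise the minimum gap between distinct
values of `J*(λ,·)`. -/
noncomputable def xi1 : ℝ :=
  if ∀ u v : S, Jopt Adm p C lam u = Jopt Adm p C lam v then 1
  else sInf {d | ∃ u v : S, Jopt Adm p C lam u < Jopt Adm p C lam v ∧
    d = Jopt Adm p C lam v - Jopt Adm p C lam u}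

/-- `ξ = min{ξ₀, ξ₁}`. -/
noncomputable def xi (α β : ℝ) : ℝ := min (xi0 lam α β) (xi1 Adm p C lam)

/-- The shifted policy obtained by prefixing the fixed history `pre`. -/
def shiftPolicy (π : Policy S A Adm) (pre : List (S × A)) : Policy S A Adm where
  toFun := fun h s a => π.toFun (pre ++ h) s a
  nonneg := fun h s a => π.nonneg _ s a
  sum_one := fun h s => π.sum_one _ s
  supp := fun h s a ha => π.supp _ s a ha

/-- The history (list of (state, action) pairs) along the trajectory `l` started at `x`. -/
def histOf : S → List (A × S) → List (S × A)
  | _, [] => []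
  | x, (a, y) :: rest => (x, a) :: histOf y rest

/-! ### Auxiliary lemmas -/

section Aux

variable {Adm} {p} {C} {lam}

/-- Transition probabilities hypothesis. -/
def Hp (Adm : S → Finset A) (p : S → A → S → ℝ) : Prop :=
  ∀ (x : S), ∀ a ∈ Adm x, (∀ y, 0 ≤ p x a y) ∧ (∑ y, p x a y) = 1

theorem pathProbAux_nonneg (hp : Hp Adm p) (π : Policy S A Adm) :
    ∀ (l : List (A × S)) (h : List (S × A)) (x : S), 0 ≤ pathProbAux Adm p π h x l := by
  intro l
  induction l with
  | nil => intro h x; simp [pathProbAux]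
  | cons q rest ih =>
    intro h x
    obtain ⟨a, y⟩ := q
    simp only [pathProbAux]
    by_cases ha : a ∈ Adm x
    · exact mul_nonneg (mul_nonneg (π.nonneg _ _ _) ((hp x a ha).1 y)) (ih _ _)
    · rw [π.supp _ _ _ ha, zero_mul, zero_mul]

theorem pathProb_nonneg (hp : Hp Adm p) (π : Policy S A Adm) (x : S) (l : List (A × S)) :
    0 ≤ pathProb Adm p π x l :=
  pathProbAux_nonneg hp π l [] x

theorem sum_step (hp : Hp Adm p) (π : Policy S A Adm) (h : List (S × A)) (x : S) :
    ∑ q : A × S, π.toFun h x q.1 * p x q.1 q.2 = 1 := by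
  rw [Fintype.sum_prod_type]
  have key : ∀ a : A, (∑ y : S, π.toFun h x a * p x a y) = π.toFun h x a := by
    intro a
    by_cases ha : a ∈ Adm x
    · rw [← Finset.mul_sum, (hp x a ha).2, mul_one]
    · simp [π.supp h x a ha]
  rw [Finset.sum_congr rfl fun a _ => key a]
  exact π.sum_one h x

theorem sum_pathProbAux (hp : Hp Adm p) :
    ∀ (n : ℕ) (π : Policy S A Adm) (h : List (S × A)) (x : S),
      ∑ v : Fin n → A × S, pathProbAux Adm p π h x (List.ofFn v) = 1 := by
  intro n
  induction n with
  | zero => intro π h x; simp [pathProbAux]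
  | succ n ih =>
    intro π h x
    rw [← (Fin.consEquiv (fun _ : Fin (n + 1) => A × S)).sum_comp]
    rw [Fintype.sum_prod_type]
    have key : ∀ q : A × S,
        (∑ r : Fin n → A × S,
          pathProbAux Adm p π h x (List.ofFn ((Fin.consEquiv _) (q, r)))) =
        π.toFun h x q.1 * p x q.1 q.2 := by
      rintro ⟨a, y⟩
      have hofn : ∀ r : Fin n → A × S,
          List.ofFn ((Fin.consEquiv (fun _ : Fin (n + 1) => A × S)) ((a, y), r)) =
            (a, y) :: List.ofFn r := by
        intro r
        rw [List.ofFn_succ]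
        simp [Fin.consEquiv]
      simp only [hofn, pathProbAux]
      rw [← Finset.mul_sum, ih π (h ++ [(x, a)]) y, mul_one]
    rw [show ∀ f g : A × S → ℝ, (∀ q, f q = g q) → ∑ q : A × S, f q = ∑ q, g q from
      fun f g hfg => Finset.sum_congr rfl fun q _ => hfg q]
    · exact sum_step hp π h x
    · intro q
      exact key q


theorem sum_pathProb (hp : Hp Adm p) (π : Policy S A Adm) (x : S) (n : ℕ) :
    ∑ v : Fin n → A × S, pathProb Adm p π x (List.ofFn v) = 1 :=
  sum_pathProbAux hp n π [] x

theorem pathProbAux_shift (π : Policy S A Adm) (h : List (S × A)) :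
    ∀ (l : List (A × S)) (h' : List (S × A)) (x : S),
      pathProbAux Adm p (shiftPolicy Adm π h) h' x l = pathProbAux Adm p π (h ++ h') x l := by
  intro l
  induction l with
  | nil => intro h' x; simp [pathProbAux]
  | cons q rest ih =>
    intro h' x
    obtain ⟨a, y⟩ := q
    simp only [pathProbAux, List.append_eq, ih, List.append_assoc]
    rfl

theorem pathProb_shift (π : Policy S A Adm) (h : List (S × A)) (l : List (A × S)) (x : S) :
    pathProb Adm p (shiftPolicy Adm π h) x l = pathProbAux Adm p π h x l := by
  rw [pathProb, pathProbAux_shift, List.append_nil]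

theorem lastState_cons (x : S) (a : A) (y : S) (l : List (A × S)) :
    lastState x ((a, y) :: l) = lastState y l := rfl

theorem lastState_append (x : S) (l₁ l₂ : List (A × S)) :
    lastState x (l₁ ++ l₂) = lastState (lastState x l₁) l₂ := by
  simp [lastState, List.foldl_append]

theorem pathProbAux_append (π : Policy S A Adm) :
    ∀ (l₁ l₂ : List (A × S)) (h : List (S × A)) (x : S),
      pathProbAux Adm p π h x (l₁ ++ l₂) =
        pathProbAux Adm p π h x l₁ *
          pathProbAux Adm p π (h ++ histOf x l₁) (lastState x l₁) l₂ := by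
  intro l₁
  induction l₁ with
  | nil => intro l₂ h x; simp [pathProbAux, histOf, lastState]
  | cons q rest ih =>
    intro l₂ h x
    obtain ⟨a, y⟩ := q
    simp only [List.cons_append, pathProbAux, histOf, lastState_cons, List.append_eq, ih,
      List.append_assoc, List.singleton_append, mul_assoc, List.nil_append]

theorem pathProb_append (π : Policy S A Adm) (x : S) (l₁ l₂ : List (A × S)) :
    pathProb Adm p π x (l₁ ++ l₂) =
      pathProb Adm p π x l₁ *
        pathProb Adm p (shiftPolicy Adm π (histOf x l₁)) (lastState x l₁) l₂ := by
  rw [pathProb, pathProbAux_append, pathProb_shift, List.nil_append]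
  rfl

theorem costSum_append (w : S → A → ℝ) :
    ∀ (l₁ l₂ : List (A × S)) (x : S),
      costSum w x (l₁ ++ l₂) = costSum w x l₁ + costSum w (lastState x l₁) l₂ := by
  intro l₁
  induction l₁ with
  | nil => intro l₂ x; simp [costSum, lastState]
  | cons q rest ih =>
    intro l₂ x
    obtain ⟨a, y⟩ := q
    simp only [List.cons_append, costSum, List.append_eq, ih, lastState_cons, add_assoc]

theorem costSum_abs_le {w : S → A → ℝ} {cB : ℝ} (hcB : ∀ s a, |w s a| ≤ cB) :
    ∀ (l : List (A × S)) (x : S), |costSum w x l| ≤ l.length * cB := by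
  intro l
  induction l with
  | nil => intro x; simp [costSum]
  | cons q rest ih =>
    intro x
    obtain ⟨a, y⟩ := q
    simp only [costSum, List.length_cons]
    calc |w x a + costSum w y rest| ≤ |w x a| + |costSum w y rest| := abs_add_le _ _
      _ ≤ cB + rest.length * cB := add_le_add (hcB x a) (ih y)
      _ = (rest.length + 1 : ℕ) * cB := by push_cast; ring


/-- The inner expectation in `Jn`. -/
noncomputable def innerSum (Adm : S → Finset A) (p : S → A → S → ℝ) (C : S → A → ℝ)
    (lam : ℝ) (π : Policy S A Adm) (x : S) (n : ℕ) : ℝ :=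
  ∑ v : Fin n → A × S,
    pathProb Adm p π x (List.ofFn v) * Real.exp (lam * costSum C x (List.ofFn v))

theorem Jn_eq (π : Policy S A Adm) (x : S) (n : ℕ) :
    Jn Adm p C lam π x n = (1 / lam) * Real.log (innerSum Adm p C lam π x n) := rfl

theorem innerSum_bounds {cB : ℝ} (hp : Hp Adm p) (hlam : 0 < lam)
    (hcB : ∀ s a, |C s a| ≤ cB) (π : Policy S A Adm) (x : S) (n : ℕ) :
    Real.exp (lam * (-(n * cB))) ≤ innerSum Adm p C lam π x n ∧
      innerSum Adm p C lam π x n ≤ Real.exp (lam * (n * cB)) := by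
  have hb : ∀ v : Fin n → A × S,
      Real.exp (lam * (-(n * cB))) ≤ Real.exp (lam * costSum C x (List.ofFn v)) ∧
        Real.exp (lam * costSum C x (List.ofFn v)) ≤ Real.exp (lam * (n * cB)) := by
    intro v
    have habs := costSum_abs_le hcB (List.ofFn v) x
    rw [List.length_ofFn] at habs
    obtain ⟨h1, h2⟩ := abs_le.1 habs
    exact ⟨Real.exp_le_exp.2 (by nlinarith), Real.exp_le_exp.2 (by nlinarith)⟩
  constructor
  · calc Real.exp (lam * (-(n * cB)))
        = ∑ v : Fin n → A × S, pathProb Adm p π x (List.ofFn v) *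
            Real.exp (lam * (-(n * cB))) := by
          rw [← Finset.sum_mul, sum_pathProb hp, one_mul]
    _ ≤ innerSum Adm p C lam π x n :=
        Finset.sum_le_sum fun v _ =>
          mul_le_mul_of_nonneg_left (hb v).1 (pathProb_nonneg hp π x _)
  · calc innerSum Adm p C lam π x n
        ≤ ∑ v : Fin n → A × S, pathProb Adm p π x (List.ofFn v) *
            Real.exp (lam * (n * cB)) :=
          Finset.sum_le_sum fun v _ =>
            mul_le_mul_of_nonneg_left (hb v).2 (pathProb_nonneg hp π x _)
    _ = Real.exp (lam * (n * cB)) := by rw [← Finset.sum_mul, sum_pathProb hp, one_mul]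

theorem innerSum_pos {cB : ℝ} (hp : Hp Adm p) (hlam : 0 < lam)
    (hcB : ∀ s a, |C s a| ≤ cB) (π : Policy S A Adm) (x : S) (n : ℕ) :
    0 < innerSum Adm p C lam π x n :=
  lt_of_lt_of_le (Real.exp_pos _) (innerSum_bounds hp hlam hcB π x n).1

theorem Jn_bounds {cB : ℝ} (hp : Hp Adm p) (hlam : 0 < lam)
    (hcB : ∀ s a, |C s a| ≤ cB) (π : Policy S A Adm) (x : S) (n : ℕ) :
    -(n * cB) ≤ Jn Adm p C lam π x n ∧ Jn Adm p C lam π x n ≤ n * cB := by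
  obtain ⟨h1, h2⟩ := innerSum_bounds hp hlam hcB π x n
  have hpos := innerSum_pos hp hlam hcB π x n
  have hl1 : lam * (-(n * cB)) ≤ Real.log (innerSum Adm p C lam π x n) := by
    have := Real.log_le_log (Real.exp_pos _) h1
    rwa [Real.log_exp] at this
  have hl2 : Real.log (innerSum Adm p C lam π x n) ≤ lam * (n * cB) := by
    have := Real.log_le_log hpos h2
    rwa [Real.log_exp] at this
  have hinv : ∀ t : ℝ, (1 / lam) * (lam * t) = t := fun t => by
    field_simp
  rw [Jn_eq]
  constructor
  · rw [← hinv (-((n : ℝ) * cB))]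
    exact mul_le_mul_of_nonneg_left hl1 (by positivity)
  · rw [← hinv ((n : ℝ) * cB)]
    exact mul_le_mul_of_nonneg_left hl2 (by positivity)

theorem JnDiv_bounds {cB : ℝ} (hp : Hp Adm p) (hlam : 0 < lam)
    (hcB : ∀ s a, |C s a| ≤ cB) (hcB0 : 0 ≤ cB) (π : Policy S A Adm) (x : S) (n : ℕ) :
    -cB ≤ Jn Adm p C lam π x n / n ∧ Jn Adm p C lam π x n / n ≤ cB := by
  rcases Nat.eq_zero_or_pos n with rfl | hn
  · simp [hcB0, neg_nonpos.2 hcB0]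
  · have hn' : (0 : ℝ) < n := by exact_mod_cast hn
    obtain ⟨h1, h2⟩ := Jn_bounds hp hlam hcB π x n
    constructor
    · rw [le_div_iff₀ hn']
      nlinarith
    · rw [div_le_iff₀ hn']
      nlinarith

theorem Javg_isBoundedUnder_le {cB : ℝ} (hp : Hp Adm p) (hlam : 0 < lam)
    (hcB : ∀ s a, |C s a| ≤ cB) (hcB0 : 0 ≤ cB) (π : Policy S A Adm) (x : S) :
    Filter.IsBoundedUnder (· ≤ ·) Filter.atTop
      (fun n : ℕ => Jn Adm p C lam π x n / n) :=
  ⟨cB, Filter.eventually_map.2 <| Filter.Eventually.of_forall fun n =>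
    (JnDiv_bounds hp hlam hcB hcB0 π x n).2⟩

theorem Javg_isBoundedUnder_ge {cB : ℝ} (hp : Hp Adm p) (hlam : 0 < lam)
    (hcB : ∀ s a, |C s a| ≤ cB) (hcB0 : 0 ≤ cB) (π : Policy S A Adm) (x : S) :
    Filter.IsBoundedUnder (· ≥ ·) Filter.atTop
      (fun n : ℕ => Jn Adm p C lam π x n / n) :=
  ⟨-cB, Filter.eventually_map.2 <| Filter.Eventually.of_forall fun n =>
    (JnDiv_bounds hp hlam hcB hcB0 π x n).1⟩

theorem Javg_bounds {cB : ℝ} (hp : Hp Adm p) (hlam : 0 < lam)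
    (hcB : ∀ s a, |C s a| ≤ cB) (hcB0 : 0 ≤ cB) (π : Policy S A Adm) (x : S) :
    -cB ≤ Javg Adm p C lam π x ∧ Javg Adm p C lam π x ≤ cB := by
  constructor
  · exact Filter.le_limsup_of_frequently_le
      (Filter.Eventually.frequently <| Filter.Eventually.of_forall fun n =>
        (JnDiv_bounds hp hlam hcB hcB0 π x n).1)
      (Javg_isBoundedUnder_le hp hlam hcB hcB0 π x)
  · exact Filter.limsup_le_of_le
      ((Javg_isBoundedUnder_ge hp hlam hcB hcB0 π x).isCoboundedUnder_le)
      (Filter.Eventually.of_forall fun n => (JnDiv_bounds hp hlam hcB hcB0 π x n).2)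

theorem Jopt_le_Javg {cB : ℝ} (hp : Hp Adm p) (hlam : 0 < lam)
    (hcB : ∀ s a, |C s a| ≤ cB) (hcB0 : 0 ≤ cB) (π : Policy S A Adm) (x : S) :
    Jopt Adm p C lam x ≤ Javg Adm p C lam π x :=
  ciInf_le ⟨-cB, by
    rintro _ ⟨π', rfl⟩
    exact (Javg_bounds hp hlam hcB hcB0 π' x).1⟩ π


theorem innerSum_prefix (hp : Hp Adm p) (π : Policy S A Adm) (x : S)
    (l : List (A × S)) (m : ℕ) :
    pathProb Adm p π x l * Real.exp (lam * costSum C x l) *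
      innerSum Adm p C lam (shiftPolicy Adm π (histOf x l)) (lastState x l) m ≤
      innerSum Adm p C lam π x (l.length + m) := by
  classical
  set F : (Fin (l.length + m) → A × S) → ℝ := fun v =>
    pathProb Adm p π x (List.ofFn v) * Real.exp (lam * costSum C x (List.ofFn v)) with hF
  have hF0 : ∀ v, 0 ≤ F v := fun v =>
    mul_nonneg (pathProb_nonneg hp π x _) (Real.exp_pos _).le
  have hinj : ∀ r₁ ∈ Finset.univ, ∀ r₂ ∈ Finset.univ,
      (fun r : Fin m → A × S => Fin.append l.get r) r₁ =
        (fun r : Fin m → A × S => Fin.append l.get r) r₂ → r₁ = r₂ := by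
    intro r₁ _ r₂ _ hr
    funext i
    have h2 := congrFun hr (Fin.natAdd l.length i)
    simp only [] at h2
    rwa [Fin.append_right, Fin.append_right] at h2
  have him : ∑ r : Fin m → A × S, F (Fin.append l.get r) ≤
      ∑ v : Fin (l.length + m) → A × S, F v := by
    rw [← Finset.sum_image hinj]
    exact Finset.sum_le_sum_of_subset_of_nonneg (Finset.subset_univ _) fun v _ _ => hF0 v
  have hval : ∀ r : Fin m → A × S, F (Fin.append l.get r) =
      pathProb Adm p π x l * Real.exp (lam * costSum C x l) *
        (pathProb Adm p (shiftPolicy Adm π (histOf x l)) (lastState x l) (List.ofFn r) *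
          Real.exp (lam * costSum C (lastState x l) (List.ofFn r))) := by
    intro r
    have hofn : List.ofFn (Fin.append l.get r) = l ++ List.ofFn r := by
      rw [List.ofFn_fin_append, List.ofFn_get]
    rw [hF]
    simp only [hofn, pathProb_append, costSum_append, mul_add, Real.exp_add]
    ring
  calc pathProb Adm p π x l * Real.exp (lam * costSum C x l) *
      innerSum Adm p C lam (shiftPolicy Adm π (histOf x l)) (lastState x l) m
      = ∑ r : Fin m → A × S, F (Fin.append l.get r) := by
        rw [innerSum, Finset.mul_sum]
        exact Finset.sum_congr rfl fun r _ => (hval r).symm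
    _ ≤ innerSum Adm p C lam π x (l.length + m) := him

theorem Jn_prefix {cB : ℝ} (hp : Hp Adm p) (hlam : 0 < lam)
    (hcB : ∀ s a, |C s a| ≤ cB) (π : Policy S A Adm) (x : S) (l : List (A × S))
    (hl : pathProb Adm p π x l ≠ 0) (m : ℕ) :
    (1 / lam) * Real.log (pathProb Adm p π x l * Real.exp (lam * costSum C x l)) +
      Jn Adm p C lam (shiftPolicy Adm π (histOf x l)) (lastState x l) m ≤
      Jn Adm p C lam π x (l.length + m) := by
  have hP : 0 < pathProb Adm p π x l :=
    lt_of_le_of_ne (pathProb_nonneg hp π x l) (Ne.symm hl)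
  have hPe : 0 < pathProb Adm p π x l * Real.exp (lam * costSum C x l) :=
    mul_pos hP (Real.exp_pos _)
  have hI' : 0 < innerSum Adm p C lam (shiftPolicy Adm π (histOf x l)) (lastState x l) m :=
    innerSum_pos hp hlam hcB _ _ m
  have hlog : Real.log (pathProb Adm p π x l * Real.exp (lam * costSum C x l)) +
      Real.log (innerSum Adm p C lam (shiftPolicy Adm π (histOf x l)) (lastState x l) m) ≤
      Real.log (innerSum Adm p C lam π x (l.length + m)) := by
    rw [← Real.log_mul hPe.ne' hI'.ne']
    exact Real.log_le_log (mul_pos hPe hI') (innerSum_prefix hp π x l m)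
  rw [Jn_eq, Jn_eq, ← mul_add]
  exact mul_le_mul_of_nonneg_left hlog (by positivity)


theorem Javg_shift_le {cB : ℝ} (hp : Hp Adm p) (hlam : 0 < lam)
    (hcB : ∀ s a, |C s a| ≤ cB) (hcB0 : 0 ≤ cB) (π : Policy S A Adm) (x : S)
    (l : List (A × S)) (hl : pathProb Adm p π x l ≠ 0) :
    Javg Adm p C lam (shiftPolicy Adm π (histOf x l)) (lastState x l) ≤
      Javg Adm p C lam π x := by
  set π' := shiftPolicy Adm π (histOf x l) with hπ'
  set y := lastState x l with hy
  set k := l.length with hk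
  set κ := (1 / lam) * Real.log (pathProb Adm p π x l * Real.exp (lam * costSum C x l)) with hκ
  set a : ℕ → ℝ := fun n => Jn Adm p C lam π x n / n with ha
  set b : ℕ → ℝ := fun m => Jn Adm p C lam π' y m / m with hbdef
  have hkey : ∀ m : ℕ, κ + Jn Adm p C lam π' y m ≤ Jn Adm p C lam π x (k + m) :=
    fun m => Jn_prefix hp hlam hcB π x l hl m
  have hbnd : ∀ m : ℕ, -cB ≤ b m ∧ b m ≤ cB :=
    fun m => JnDiv_bounds hp hlam hcB hcB0 π' y m
  show Filter.limsup b Filter.atTop ≤ Filter.limsup a Filter.atTop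
  set L := Filter.limsup b Filter.atTop with hL
  set ν := |κ| + cB * k with hν
  have hν0 : 0 ≤ ν := by positivity
  refine le_of_forall_sub_le fun δ hδ => ?_
  have hfreqb : ∃ᶠ m in Filter.atTop, L - δ / 2 < b m :=
    Filter.frequently_lt_of_lt_limsup
      ((Javg_isBoundedUnder_ge hp hlam hcB hcB0 π' y).isCoboundedUnder_le)
      (sub_lt_self L (half_pos hδ))
  have hev : ∀ᶠ m : ℕ in Filter.atTop, ν / m < δ / 2 ∧ 1 ≤ m :=
    ((tendsto_const_div_atTop_nhds_zero_nat ν).eventually_lt_const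
      (half_pos hδ)).and (Filter.eventually_ge_atTop 1)
  have hfreq := hfreqb.and_eventually hev
  have hfreqa : ∃ᶠ n in Filter.atTop, L - δ ≤ a n := by
    rw [Filter.frequently_atTop] at hfreq ⊢
    intro N
    obtain ⟨m, hmN, hbm, hνm, hm1⟩ := hfreq N
    refine ⟨k + m, le_trans hmN (Nat.le_add_left m k), ?_⟩
    have hm0 : (0 : ℝ) < m := by exact_mod_cast hm1
    have hkm : (0 : ℝ) < (k : ℝ) + m := by positivity
    have hkmn : ((k + m : ℕ) : ℝ) = (k : ℝ) + m := by push_cast; ring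
    have hstep1 : (κ + Jn Adm p C lam π' y m) / ((k : ℝ) + m) ≤ a (k + m) := by
      simp only [ha]
      rw [hkmn]
      gcongr
      exact hkey m
    have hJ' : Jn Adm p C lam π' y m = b m * m := by
      rw [hbdef]
      field_simp
    have hsplit : (κ + Jn Adm p C lam π' y m) / ((k : ℝ) + m) =
        κ / ((k : ℝ) + m) + b m - b m * ((k : ℝ) / ((k : ℝ) + m)) := by
      rw [hJ']
      field_simp
      ring
    have h1 : -(|κ| / m) ≤ κ / ((k : ℝ) + m) := by
      have e1 : |κ| / ((k : ℝ) + m) ≤ |κ| / m := by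
        gcongr
        linarith [Nat.cast_nonneg (α := ℝ) k]
      have e2 : -(|κ| / ((k : ℝ) + m)) ≤ κ / ((k : ℝ) + m) := by
        rw [← neg_div]
        gcongr
        exact neg_abs_le κ
      linarith
    have h2 : b m * ((k : ℝ) / ((k : ℝ) + m)) ≤ cB * k / m := by
      have e1 : b m * ((k : ℝ) / ((k : ℝ) + m)) ≤ cB * ((k : ℝ) / ((k : ℝ) + m)) := by
        gcongr
        exact (hbnd m).2
      have e2 : cB * ((k : ℝ) / ((k : ℝ) + m)) ≤ cB * ((k : ℝ) / m) := by
        gcongr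
        linarith [Nat.cast_nonneg (α := ℝ) k]
      calc b m * ((k : ℝ) / ((k : ℝ) + m)) ≤ cB * ((k : ℝ) / m) := e1.trans e2
        _ = cB * k / m := by ring
    have hνsplit : ν / m = |κ| / m + cB * k / m := by
      rw [hν]
      ring
    have : L - δ ≤ (κ + Jn Adm p C lam π' y m) / ((k : ℝ) + m) := by
      rw [hsplit]
      have hbm' : L - δ / 2 ≤ b m := hbm.le
      have hνm' : ν / m ≤ δ / 2 := hνm.le
      rw [hνsplit] at hνm'
      linarith
    linarith [hstep1]
  have := Filter.le_limsup_of_frequently_le hfreqa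
    (Javg_isBoundedUnder_le hp hlam hcB hcB0 π x)
  linarith [this]


theorem lastState_singleton (x : S) (q : A × S) : lastState x [q] = q.2 := rfl

theorem lastState_take (x : S) {n : ℕ} (v : Fin n → A × S) (t : Fin n) :
    lastState x ((List.ofFn v).take ((t : ℕ) + 1)) = (v t).2 := by
  have hlen : (t : ℕ) < (List.ofFn v).length := by simp [t.isLt]
  rw [List.take_succ, List.getElem?_eq_getElem hlen, lastState_append]
  simp [lastState_singleton, List.getElem_ofFn]

theorem exists_path_to_z {β β₀ : ℝ} (hp : Hp Adm p) (hβ : β ∈ Set.Ioo (0 : ℝ) 1)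
    (π : Policy S A Adm) (x z : S)
    (hT : ∀ n : ℕ, survProb Adm p π x z n ≤ β₀ * β ^ (n + 1)) :
    ∃ l : List (A × S), pathProb Adm p π x l ≠ 0 ∧ lastState x l = z := by
  classical
  have htend : Filter.Tendsto (fun n : ℕ => β₀ * β ^ n) Filter.atTop (nhds 0) := by
    have := tendsto_pow_atTop_nhds_zero_of_lt_one hβ.1.le hβ.2
    simpa using this.const_mul β₀
  obtain ⟨n₀, hn₀⟩ := (htend.eventually_lt_const one_pos).exists_forall_of_atTop
  have hsurv : survProb Adm p π x z n₀ < 1 :=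
    lt_of_le_of_lt (hT n₀) (hn₀ (n₀ + 1) (Nat.le_succ n₀))
  have hmass := sum_pathProb hp π x n₀
  have hlt : ∑ v : Fin n₀ → A × S,
      (if ∀ t : Fin n₀, (v t).2 ≠ z then pathProb Adm p π x (List.ofFn v) else 0) <
      ∑ v : Fin n₀ → A × S, pathProb Adm p π x (List.ofFn v) := by
    rw [hmass]
    have hinst : ∀ (P : Prop) (d₁ d₂ : Decidable P) (r : ℝ),
        @ite ℝ P d₁ r 0 = @ite ℝ P d₂ r 0 := fun P d₁ d₂ r => by
      rw [Subsingleton.elim d₁ d₂]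
    simp only [survProb, cylProb] at hsurv
    calc ∑ v : Fin n₀ → A × S,
        (if ∀ t : Fin n₀, (v t).2 ≠ z then pathProb Adm p π x (List.ofFn v) else 0)
        = ∑ v : Fin n₀ → A × S,
          @ite ℝ (∀ t : Fin n₀, (v t).2 ≠ z) (Classical.propDecidable _)
            (pathProb Adm p π x (List.ofFn v)) 0 :=
          Finset.sum_congr rfl fun v _ => hinst _ _ _ _
      _ < 1 := hsurv
  obtain ⟨v, _, hv⟩ := Finset.exists_lt_of_sum_lt hlt
  have h0le : (0 : ℝ) ≤
      if ∀ t : Fin n₀, (v t).2 ≠ z then pathProb Adm p π x (List.ofFn v) else 0 := by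
    split
    · exact pathProb_nonneg hp π x _
    · exact le_refl 0
  have hvP : 0 < pathProb Adm p π x (List.ofFn v) := lt_of_le_of_lt h0le hv
  have hcond : ¬ (∀ t : Fin n₀, (v t).2 ≠ z) := by
    intro hcond
    rw [if_pos hcond] at hv
    exact lt_irrefl _ hv
  push_neg at hcond
  obtain ⟨t, ht⟩ := hcond
  refine ⟨(List.ofFn v).take ((t : ℕ) + 1), ?_, by rw [lastState_take]; exact ht⟩
  intro h0
  have := pathProb_append (p := p) π x ((List.ofFn v).take ((t : ℕ) + 1))
    ((List.ofFn v).drop ((t : ℕ) + 1))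
  rw [List.take_append_drop, h0, zero_mul] at this
  rw [this] at hvP
  exact lt_irrefl _ hvP

theorem Jopt_z_le {cB β β₀ : ℝ} (hA : ∀ x, (Adm x).Nonempty) (hp : Hp Adm p)
    (hlam : 0 < lam)
    (hcB : ∀ s a, |C s a| ≤ cB) (hcB0 : 0 ≤ cB) (hβ : β ∈ Set.Ioo (0 : ℝ) 1) (z : S)
    (hTail : ∀ (x : S) (π : Policy S A Adm) (n : ℕ),
      survProb Adm p π x z n ≤ β₀ * β ^ (n + 1)) (x : S) :
    Jopt Adm p C lam z ≤ Jopt Adm p C lam x := by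
  haveI : Nonempty (Policy S A Adm) :=
    ⟨stationary Adm (fun s => (hA s).choose) (fun s => (hA s).choose_spec)⟩
  refine le_ciInf fun π => ?_
  obtain ⟨l, hl, hlz⟩ := exists_path_to_z hp hβ π x z (fun n => hTail x π n)
  calc Jopt Adm p C lam z
      ≤ Javg Adm p C lam (shiftPolicy Adm π (histOf x l)) z :=
        Jopt_le_Javg hp hlam hcB hcB0 _ z
    _ = Javg Adm p C lam (shiftPolicy Adm π (histOf x l)) (lastState x l) := by rw [hlz]
    _ ≤ Javg Adm p C lam π x := Javg_shift_le hp hlam hcB hcB0 π x l hl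


theorem cylProb_nonneg (hp : Hp Adm p) (π : Policy S A Adm) (x : S) (n : ℕ)
    (E : (Fin n → A × S) → Prop) : 0 ≤ cylProb Adm p π x n E := by
  simp only [cylProb]
  refine Finset.sum_nonneg fun v _ => ?_
  split
  · exact pathProb_nonneg hp π x _
  · exact le_refl 0

theorem cylProb_mono (hp : Hp Adm p) (π : Policy S A Adm) (x : S) {n : ℕ}
    {E E' : (Fin n → A × S) → Prop} (h : ∀ v, E v → E' v) :
    cylProb Adm p π x n E ≤ cylProb Adm p π x n E' := by
  simp only [cylProb]
  refine Finset.sum_le_sum fun v _ => ?_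
  by_cases hv : E v
  · rw [if_pos hv, if_pos (h v hv)]
  · rw [if_neg hv]
    split
    · exact pathProb_nonneg hp π x _
    · exact le_refl 0

theorem cylProb_congr {π : Policy S A Adm} {x : S} {n : ℕ}
    {E E' : (Fin n → A × S) → Prop}
    (h : ∀ v, pathProb Adm p π x (List.ofFn v) ≠ 0 → (E v ↔ E' v)) :
    cylProb Adm p π x n E = cylProb Adm p π x n E' := by
  simp only [cylProb]
  refine Finset.sum_congr rfl fun v _ => ?_
  by_cases hP : pathProb Adm p π x (List.ofFn v) = 0
  · rw [hP]
    simp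
  · rw [if_congr (h v hP) rfl rfl]

theorem cylProb_split (π : Policy S A Adm) (x : S) {n : ℕ}
    (E E' : (Fin n → A × S) → Prop) (hdis : ∀ v, ¬(E v ∧ E' v)) :
    cylProb Adm p π x n (fun v => E v ∨ E' v) =
      cylProb Adm p π x n E + cylProb Adm p π x n E' := by
  simp only [cylProb, ← Finset.sum_add_distrib]
  refine Finset.sum_congr rfl fun v _ => ?_
  by_cases h1 : E v
  · rw [if_pos (Or.inl h1), if_pos h1, if_neg fun h2 => hdis v ⟨h1, h2⟩, add_zero]
  · by_cases h2 : E' v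
    · rw [if_pos (Or.inr h2), if_neg h1, if_pos h2, zero_add]
    · rw [if_neg (by tauto), if_neg h1, if_neg h2, add_zero]

theorem cylProb_succ (hp : Hp Adm p) (π : Policy S A Adm) (x : S) (N : ℕ)
    (E : (Fin N → A × S) → Prop) :
    cylProb Adm p π x (N + 1) (fun v => E (fun t => v t.castSucc)) =
      cylProb Adm p π x N E := by
  classical
  simp only [cylProb]
  rw [← (Fin.snocEquiv (fun _ : Fin (N + 1) => A × S)).sum_comp]
  rw [Fintype.sum_prod_type, Finset.sum_comm]
  refine Finset.sum_congr rfl fun u _ => ?_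
  have hsnoc : ∀ q : A × S,
      (fun t : Fin N => ((Fin.snocEquiv (fun _ => A × S)) (q, u)) t.castSucc) = u := by
    intro q
    funext t
    simp [Fin.snocEquiv, Fin.snoc_castSucc]
  have hofn : ∀ q : A × S,
      List.ofFn ((Fin.snocEquiv (fun _ : Fin (N + 1) => A × S)) (q, u)) =
        List.ofFn u ++ [q] := by
    intro q
    rw [List.ofFn_succ']
    simp [Fin.snocEquiv, Fin.snoc_castSucc, Fin.snoc_last, List.concat_eq_append]
  have hterm : ∀ q : A × S,
      (if E (fun t => ((Fin.snocEquiv (fun _ : Fin (N + 1) => A × S)) (q, u)) t.castSucc)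
        then pathProb Adm p π x
          (List.ofFn ((Fin.snocEquiv (fun _ : Fin (N + 1) => A × S)) (q, u))) else 0) =
      (if E u then pathProb Adm p π x (List.ofFn u ++ [q]) else 0) := by
    intro q
    rw [if_congr (iff_of_eq (congrArg E (hsnoc q))) (by rw [hofn q]) rfl]
  rw [Finset.sum_congr rfl fun q _ => hterm q]
  by_cases hE : E u
  · simp only [if_pos hE]
    have hq : ∀ q : A × S, pathProb Adm p π x (List.ofFn u ++ [q]) =
        pathProb Adm p π x (List.ofFn u) *
          (π.toFun (histOf x (List.ofFn u)) (lastState x (List.ofFn u)) q.1 *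
            p (lastState x (List.ofFn u)) q.1 q.2) := by
      intro q
      rw [pathProb_append, pathProb_shift]
      simp only [pathProbAux, mul_one]
    rw [Finset.sum_congr rfl fun q _ => hq q, ← Finset.mul_sum, sum_step hp, mul_one]
  · simp only [if_neg hE, Finset.sum_const_zero]

theorem exit_decomp (hp : Hp Adm p) (π : Policy S A Adm) (x : S) (N : ℕ) (Q : S → Prop) :
    cylProb Adm p π x N (fun v => ∀ t, Q (v t).2) =
      cylProb Adm p π x (N + 1) (fun v => ∀ t, Q (v t).2) +
        cylProb Adm p π x (N + 1) (fun v => FirstExit Q v) := by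
  rw [← cylProb_succ hp π x N (fun v => ∀ t, Q (v t).2)]
  have hiff : ∀ v : Fin (N + 1) → A × S,
      (∀ t : Fin N, Q ((fun t : Fin N => v t.castSucc) t).2) ↔
        ((∀ t, Q (v t).2) ∨ FirstExit Q v) := by
    intro v
    constructor
    · intro hpre
      by_cases hlast : Q (v (Fin.last N)).2
      · left
        intro t
        rcases Fin.eq_castSucc_or_eq_last t with ⟨j, rfl⟩ | rfl
        · exact hpre j
        · exact hlast
      · right
        refine ⟨Nat.succ_pos N, fun t ht => ?_, fun t ht => ?_⟩
        · have htN : (t : ℕ) < N := by omega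
          have : t = (⟨(t : ℕ), htN⟩ : Fin N).castSucc := by
            apply Fin.ext
            simp
          rw [this]
          exact hpre _
        · have : t = Fin.last N := by
            apply Fin.ext
            simp only [Fin.val_last]
            omega
          rw [this]
          exact hlast
    · rintro (hall | ⟨-, hpre, -⟩)
      · intro t
        exact hall _
      · intro t
        refine hpre t.castSucc ?_
        have := t.isLt
        simp only [Fin.coe_castSucc]
        omega
  rw [cylProb_congr (fun v _ => hiff v)]
  refine cylProb_split π x _ _ fun v ⟨hall, hFE⟩ => ?_
  exact hFE.2.2 (Fin.last N) (by simp) (hall _)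

theorem lastState_ofFn_last (x : S) {m : ℕ} (v : Fin (m + 1) → A × S) :
    lastState x (List.ofFn v) = (v (Fin.last m)).2 := by
  rw [List.ofFn_succ', List.concat_eq_append, lastState_append, lastState_singleton]

theorem stateAt_eq_lastState (x : S) {n : ℕ} (v : Fin n → A × S) :
    stateAt x (List.ofFn v) n = lastState x (List.ofFn v) := by
  rw [stateAt, List.take_of_length_le (by simp)]
  rfl

end Aux

/-- under the hypotheses of the previous statement, with probability one
the system exits the level set `G_i = {y : J*(λ,y) = J*(λ,x)}` into a strictly lower
level set of `J*(λ,·)`. -/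
theorem exits_to_lower_level
    (hA : ∀ x, (Adm x).Nonempty)
    (hp : ∀ (x : S), ∀ a ∈ Adm x, (∀ y, 0 ≤ p x a y) ∧ (∑ y, p x a y) = 1)
    (hlam : 0 < lam) (α : ℝ) (hα : α ∈ Set.Ioo (0 : ℝ) 1)
    (z : S) (M : ℝ) (hDoe : Doeblin Adm p z M)
    (β β₀ : ℝ) (hβ : β ∈ Set.Ioo (0 : ℝ) 1) (hβ₀ : 0 < β₀)
    (hTail : ∀ (x : S) (π : Policy S A Adm) (n : ℕ),
      survProb Adm p π x z n ≤ β₀ * β ^ (n + 1))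
    (hNC : ∃ u v : S, Jopt Adm p C lam u ≠ Jopt Adm p C lam v)
    (x : S) (hx : (⨅ y : S, Jopt Adm p C lam y) < Jopt Adm p C lam x)
    (ε : ℝ) (hε : ε ∈ Set.Ioo 0 (xi Adm p C lam α β))
    (π : Policy S A Adm) (hopt : EpsOptimalAt Adm p C lam π x ε) :
    (∑' n : ℕ, cylProb Adm p π x n
      (fun v => FirstExit (fun y => Jopt Adm p C lam y = Jopt Adm p C lam x) v ∧
        Jopt Adm p C lam (stateAt x (List.ofFn v) n) < Jopt Adm p C lam x)) = 1 := by
  classical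
  haveI : Nonempty S := ⟨x⟩
  obtain ⟨cB, hcB, hcB0⟩ : ∃ cB : ℝ, (∀ s a, |C s a| ≤ cB) ∧ 0 ≤ cB := by
    refine ⟨∑ q : S × A, |C q.1 q.2|, fun s a => ?_,
      Finset.sum_nonneg fun q _ => abs_nonneg _⟩
    exact Finset.single_le_sum (f := fun q : S × A => |C q.1 q.2|)
      (fun q _ => abs_nonneg _) (Finset.mem_univ (s, a))
  have hp' : Hp Adm p := hp
  -- `z` has minimal optimal value, hence `Jopt z < Jopt x`
  have hzmin : ∀ y, Jopt Adm p C lam z ≤ Jopt Adm p C lam y :=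
    Jopt_z_le hA hp' hlam hcB hcB0 hβ z hTail
  have hzx : Jopt Adm p C lam z < Jopt Adm p C lam x :=
    lt_of_le_of_lt (le_ciInf hzmin) hx
  -- gap property
  have hxi1 : ε < xi1 Adm p C lam :=
    lt_of_lt_of_le hε.2 (min_le_right _ _)
  have hgap : ∀ y, Jopt Adm p C lam x < Jopt Adm p C lam y →
      Jopt Adm p C lam x + ε < Jopt Adm p C lam y := by
    intro y hy
    have hset : (Jopt Adm p C lam y - Jopt Adm p C lam x) ∈
        {d | ∃ u v : S, Jopt Adm p C lam u < Jopt Adm p C lam v ∧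
          d = Jopt Adm p C lam v - Jopt Adm p C lam u} := ⟨x, y, hy, rfl⟩
    have hbdd : BddBelow {d | ∃ u v : S, Jopt Adm p C lam u < Jopt Adm p C lam v ∧
        d = Jopt Adm p C lam v - Jopt Adm p C lam u} := by
      refine ⟨0, ?_⟩
      rintro d ⟨u, v, huv, rfl⟩
      linarith
    have h1 : xi1 Adm p C lam ≤ Jopt Adm p C lam y - Jopt Adm p C lam x := by
      rw [xi1, if_neg]
      · exact csInf_le hbdd hset
      · push_neg
        obtain ⟨u, v, huv⟩ := hNC
        exact ⟨u, v, huv⟩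
    linarith
  -- exits to strictly higher level sets have zero probability
  have hzero : ∀ (n : ℕ) (v : Fin n → A × S),
      Jopt Adm p C lam x < Jopt Adm p C lam (lastState x (List.ofFn v)) →
        pathProb Adm p π x (List.ofFn v) = 0 := by
    intro n v hhigh
    by_contra hP
    have h1 : Jopt Adm p C lam (lastState x (List.ofFn v)) ≤
        Javg Adm p C lam (shiftPolicy Adm π (histOf x (List.ofFn v)))
          (lastState x (List.ofFn v)) :=
      Jopt_le_Javg hp' hlam hcB hcB0 _ _
    have h2 := Javg_shift_le hp' hlam hcB hcB0 π x (List.ofFn v) hP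
    have h3 : Javg Adm p C lam π x ≤ Jopt Adm p C lam x + ε := hopt
    have h4 := hgap _ hhigh
    linarith
  set Q : S → Prop := fun y => Jopt Adm p C lam y = Jopt Adm p C lam x with hQdef
  -- the event can be simplified to the pure first-exit event
  have hqq : ∀ n : ℕ, cylProb Adm p π x n
      (fun v => FirstExit Q v ∧
        Jopt Adm p C lam (stateAt x (List.ofFn v) n) < Jopt Adm p C lam x) =
      cylProb Adm p π x n (fun v => FirstExit Q v) := by
    intro n
    refine cylProb_congr fun v hP => ?_
    constructor
    · rintro ⟨h1, -⟩
      exact h1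
    · intro h1
      refine ⟨h1, ?_⟩
      obtain ⟨m, rfl⟩ : ∃ m, n = m + 1 := ⟨n - 1, by have := h1.1; omega⟩
      rw [stateAt_eq_lastState, lastState_ofFn_last]
      have hne : ¬ Q (v (Fin.last m)).2 := h1.2.2 (Fin.last m) (by simp)
      rcases lt_trichotomy (Jopt Adm p C lam ((v (Fin.last m)).2))
          (Jopt Adm p C lam x) with hlt | heq | hgt
      · exact hlt
      · exact absurd heq hne
      · exact absurd (hzero (m + 1) v (by rw [lastState_ofFn_last]; exact hgt)) hP
  set q : ℕ → ℝ := fun n => cylProb Adm p π x n (fun v => FirstExit Q v) with hqdef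
  set R : ℕ → ℝ := fun N => cylProb Adm p π x N (fun v => ∀ t, Q (v t).2) with hRdef
  have hq0 : ∀ n, 0 ≤ q n := fun n => cylProb_nonneg hp' π x n _
  have hR0 : ∀ N, 0 ≤ R N := fun N => cylProb_nonneg hp' π x N _
  have hRsurv : ∀ N, R N ≤ β₀ * β ^ (N + 1) := by
    intro N
    have hmono : R N ≤ cylProb Adm p π x N (fun v => ∀ t : Fin N, (v t).2 ≠ z) := by
      refine cylProb_mono hp' π x fun v hv t heq => ?_
      have := hv t
      rw [heq] at this
      exact absurd this (ne_of_lt hzx)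
    exact le_trans hmono (hTail x π N)
  have hpart : ∀ N, (∑ n ∈ Finset.range (N + 1), q n) + R N = 1 := by
    intro N
    induction N with
    | zero =>
      have hq00 : q 0 = 0 := by
        rw [hqdef]
        simp only [cylProb]
        exact Finset.sum_eq_zero fun v _ => if_neg fun hFE => Nat.lt_irrefl 0 hFE.1
      have hR00 : R 0 = 1 := by
        rw [hRdef]
        simp [cylProb, pathProb, pathProbAux]
      rw [Finset.sum_range_succ, Finset.sum_range_zero, hq00, hR00]
      norm_num
    | succ N ih =>
      have hdec := exit_decomp hp' π x N Q
      rw [Finset.sum_range_succ]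
      have hRN : R N = R (N + 1) + q (N + 1) := hdec
      linarith
  have hle1 : ∀ N, (∑ n ∈ Finset.range N, q n) ≤ 1 := by
    intro N
    cases N with
    | zero => simp
    | succ N =>
      have h1 := hpart N
      have h2 := hR0 N
      linarith
  have hsummable : Summable q := summable_of_sum_range_le hq0 hle1
  have htendβ : Filter.Tendsto (fun N : ℕ => β₀ * β ^ (N + 1)) Filter.atTop (nhds 0) := by
    have h := (tendsto_pow_atTop_nhds_zero_of_lt_one hβ.1.le hβ.2).const_mul β₀
    rw [mul_zero] at h
    exact h.comp (Filter.tendsto_add_atTop_nat 1)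
  have htendR : Filter.Tendsto R Filter.atTop (nhds 0) := squeeze_zero hR0 hRsurv htendβ
  have htend1 : Filter.Tendsto (fun N => ∑ n ∈ Finset.range (N + 1), q n)
      Filter.atTop (nhds 1) := by
    have heq : (fun N => ∑ n ∈ Finset.range (N + 1), q n) = fun N => 1 - R N :=
      funext fun N => by linarith [hpart N]
    rw [heq]
    simpa using tendsto_const_nhds.sub htendR
  have htend : Filter.Tendsto (fun N => ∑ n ∈ Finset.range N, q n)
      Filter.atTop (nhds 1) := (Filter.tendsto_add_atTop_iff_nat 1).mp htend1
  have hlim : (∑' n, q n) = 1 :=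
    tendsto_nhds_unique hsummable.hasSum.tendsto_sum_nat htend
  calc (∑' n : ℕ, cylProb Adm p π x n
      (fun v => FirstExit Q v ∧
        Jopt Adm p C lam (stateAt x (List.ofFn v) n) < Jopt Adm p C lam x))
      = ∑' n, q n := tsum_congr hqq
    _ = 1 := hlim

end RiskSensitive
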